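/- arXiv:math/9610226 — 2 statements merged into one kernel-verified Lean document; each statement's English description precedes it below -/
import Mathlib

section
/- Let λ be a singular strong limit cardinal, θ a cardinal with 2 ≤ θ < λ, δ* a limit ordinal and κ a cardinal such that cf(λ) = cf(δ*) ≤ δ* < cf(κ) ≤ κ < λ. Let ⟨μ_α : α < δ*⟩ be a strictly increasing sequence of strong limit cardinals with supremum λ such that θ < μ_0 and, for every α < δ*, cf(μ_α) < κ and 2^{μ_α} = μ_α⁺. Let χ be a cardinal with λ < χ < 2^λ and suppose there is an ideal J on δ* containing every bounded subset of δ* such that ∏_{α<δ*} μ_α⁺ / J is χ⁺-directed: for every family F of at most χ functions f with domain δ* and f(α) < μ_α⁺ for all α < δ*, there is such a function g with f ≤_J g for every f ∈ F. Then d_{<κ}(λ, θ) > χ. -/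
open Cardinal Set

noncomputable section

/-- `covNum μ λ κ σ` : the covering number cov(μ, λ, κ, σ). -/
noncomputable def covNum (mu lam kap sig : Cardinal.{0}) : Cardinal.{0} :=
  sInf { c : Cardinal |
    ∃ P : Set (Set mu.out), #P = c ∧ (∀ A ∈ P, #A < lam) ∧
      ∀ X : Set mu.out, #X < kap →
        ∃ Q : Set (Set mu.out), Q ⊆ P ∧ #Q < sig ∧ X ⊆ ⋃₀ Q }

/-- cf(∏ a / D) : the least cardinality of a ≤_D-cofinal subfamily of ∏ a. -/
noncomputable def cfProd (a : Set Cardinal.{0}) (D : Ultrafilter a) : Cardinal.{0} :=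
  sInf { c : Cardinal |
    ∃ F : Set (↥a → Ordinal),
      #F = Cardinal.lift.{1} c ∧
      (∀ f ∈ F, ∀ θ : a, f θ < (θ : Cardinal).ord) ∧
      (∀ f : ↥a → Ordinal, (∀ θ : a, f θ < (θ : Cardinal).ord) →
        ∃ g ∈ F, { θ : a | f θ ≤ g θ } ∈ D) }

/-- pcf(a) = { cf(∏ a / D) : D an ultrafilter on a }. -/
noncomputable def pcf (a : Set Cardinal.{0}) : Set Cardinal.{0} :=
  { c | ∃ D : Ultrafilter a, cfProd a D = c }

/-- A witness for `pp κ μ`: a set `a` of regular cardinals below `μ` of cardinality at most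
`κ` with supremum `μ`, together with an ultrafilter on `a` containing all co-bounded sets. -/
def IsPPWitness (kap mu : Cardinal.{0}) (a : Set Cardinal.{0}) (D : Ultrafilter a) : Prop :=
  (∀ θ ∈ a, θ.IsRegular ∧ θ < mu) ∧
  #(↥a) ≤ Cardinal.lift.{1} kap ∧
  sSup a = mu ∧
  ∀ s : Set a, (∃ γ, γ < mu ∧ ∀ θ : a, θ ∉ s → (θ : Cardinal) ≤ γ) → s ∈ D

/-- pp_κ(μ). -/
noncomputable def pp (kap mu : Cardinal.{0}) : Cardinal.{0} :=
  sSup { c | ∃ (a : Set Cardinal) (D : Ultrafilter a), IsPPWitness kap mu a D ∧ cfProd a D = c }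

/-- pp⁺_κ(μ) : the least cardinal strictly greater than all the relevant cofinalities. -/
noncomputable def ppPlus (kap mu : Cardinal.{0}) : Cardinal.{0} :=
  sInf { c | ∀ (a : Set Cardinal) (D : Ultrafilter a), IsPPWitness kap mu a D → cfProd a D < c }

/-- pp(μ) = pp_{cf μ}(μ). -/
noncomputable def ppStd (mu : Cardinal.{0}) : Cardinal := pp mu.ord.cof mu

/-- pp⁺(μ) = pp⁺_{cf μ}(μ). -/
noncomputable def ppPlusStd (mu : Cardinal.{0}) : Cardinal := ppPlus mu.ord.cof mu

/-- A tree: a strict partial order in which the predecessors of any point are well-ordered. -/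
structure STree : Type 1 where
  carrier : Type
  lt : carrier → carrier → Prop
  isStrict : IsStrictOrder carrier lt
  predWellOrder : ∀ x : carrier, IsWellOrder { y : carrier // lt y x } (fun a b => lt a.1 b.1)

/-- The level of a point of a tree: the order type of its set of predecessors. -/
noncomputable def STree.level (T : STree) (x : T.carrier) : Ordinal :=
  @Ordinal.type { y : T.carrier // T.lt y x } (fun a b => T.lt a.1 b.1) (T.predWellOrder x)

/-- A δ-branch of a tree: a chain meeting the α-th level for every α < δ. -/
def STree.IsBranch (T : STree) (δ : Ordinal) (B : Set T.carrier) : Prop :=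
  (∀ x ∈ B, ∀ y ∈ B, x = y ∨ T.lt x y ∨ T.lt y x) ∧
  ∀ α < δ, ∃ x ∈ B, T.level x = α

/-- The cardinality of a tree. -/
noncomputable def STree.card (T : STree) : Cardinal := #T.carrier

/-- The number of δ-branches of a tree. -/
noncomputable def STree.branchCard (T : STree) (δ : Ordinal) : Cardinal :=
  #{ B : Set T.carrier // T.IsBranch δ B }

/-- A (set-theoretic, proper) ideal on a set `X`. -/
structure SIdeal (X : Type*) where
  sets : Set (Set X)
  empty_mem : ∅ ∈ sets
  mem_of_subset : ∀ {A B : Set X}, A ∈ sets → B ⊆ A → B ∈ sets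
  union_mem : ∀ {A B : Set X}, A ∈ sets → B ∈ sets → A ∪ B ∈ sets
  univ_not_mem : Set.univ ∉ sets

/-- `dens κ λ θ` = d_{<κ}(λ, θ), the density of the `<κ`-box product of λ copies of θ. -/
noncomputable def dens (kap lam theta : Cardinal.{0}) : Cardinal :=
  sInf { c : Cardinal |
    ∃ F : Set (lam.out → theta.out), #F = c ∧
      ∀ (A : Set lam.out) (g : ↥A → theta.out), #(↥A) < kap →
        ∃ f ∈ F, ∀ x : A, f x.1 = g x }

lemma my_exists_ne_of_mk_lt {α β : Type u} (f : α → β) (h : #β < #α) :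
    ∃ x y, x ≠ y ∧ f x = f y := by
  by_contra hc
  push_neg at hc
  have hinj : Function.Injective f := by
    intro x y hxy
    by_contra hne
    exact hc x y hne hxy
  exact absurd (Cardinal.mk_le_of_injective hinj) (not_le.2 h)

lemma my_exists_coder (Θ : Type) (v₀ v₁ : Θ) (hv : v₀ ≠ v₁) (μ : Cardinal.{0})
    (hmu : ℵ₀ ≤ μ) (hsl : ∀ σ : Cardinal, σ < μ → (2:Cardinal) ^ σ < μ)
    (hθ : #Θ ≤ μ) (hθ2 : 2 ≤ #Θ) (hpow : (2:Cardinal) ^ μ = Order.succ μ) :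
    ∃ (D : Type) (cd : (D → Θ) → Ordinal),
      #D = μ ∧ (∀ w, cd w < (Order.succ μ).ord) ∧
      ∀ γ : Ordinal, γ < (Order.succ μ).ord →
        ∃ (A : Set D) (ψ : D → Θ), #(↥A) ≤ μ.ord.cof * 2 ∧
          ∀ w : D → Θ, (∀ d ∈ A, w d = ψ d) → γ < cd w := by
  classical
  set M := μ.ord.ToType with hMdef
  haveI : IsWellOrder M (· < ·) := isWellOrder_lt
  have hMcard : #M = μ := by rw [hMdef, Cardinal.mk_toType, Cardinal.card_ord]
  have hlimord : Order.IsSuccLimit (μ.ord) := Cardinal.isSuccLimit_ord hmu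
  have hcofinf : ℵ₀ ≤ (μ.ord).cof := Ordinal.aleph0_le_cof.2 hlimord
  -- unbounded set of size cof
  obtain ⟨S, hSu', hSc⟩ := Order.exists_cof_eq (α := M)
  have hSu : ∀ a : M, ∃ b ∈ S, ¬ b < a := fun a => by
    obtain ⟨b, hb, hab⟩ := hSu' a; exact ⟨b, hb, not_lt.2 hab⟩
  rw [Ordinal.cof_toType] at hSc
  -- the domain
  refine ⟨M × ↥S, ?_⟩
  have hD : #(M × ↥S) = μ := by
    rw [Cardinal.mk_prod, Cardinal.lift_id, Cardinal.lift_id, hMcard, hSc,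
      Cardinal.mul_eq_max hmu hcofinf, max_eq_left (Ordinal.cof_ord_le μ)]
  -- the coding bijection
  have hfun : #((M × ↥S) → Θ) = Order.succ μ := by
    rw [← Cardinal.power_def, hD]
    have h1 : (2:Cardinal) ^ μ ≤ #Θ ^ μ := Cardinal.power_le_power_right hθ2
    have h2 : #Θ ^ μ ≤ (2:Cardinal) ^ μ := by
      calc #Θ ^ μ ≤ ((2:Cardinal) ^ μ) ^ μ :=
            Cardinal.power_le_power_right (hθ.trans (Cardinal.cantor μ).le)
        _ = (2:Cardinal) ^ (μ * μ) := by rw [← Cardinal.power_mul]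
        _ = (2:Cardinal) ^ μ := by rw [Cardinal.mul_eq_self hmu]
    rw [← hpow]
    exact le_antisymm h2 h1
  set N := (Order.succ μ).ord.ToType with hNdef
  haveI : IsWellOrder N (· < ·) := isWellOrder_lt
  have hNcard : #N = Order.succ μ := by rw [hNdef, Cardinal.mk_toType, Cardinal.card_ord]
  have e : ((M × ↥S) → Θ) ≃ N := Classical.choice (Cardinal.eq.mp (hfun.trans hNcard.symm))
  refine ⟨fun w => Ordinal.typein ((· < ·) : N → N → Prop) (e w), hD, ?_, ?_⟩
  · intro w
    have := Ordinal.typein_lt_type ((· < ·) : N → N → Prop) (e w)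
    rwa [Ordinal.type_toType] at this
  · intro γ hγ
    have hslim : Order.IsSuccLimit ((Order.succ μ).ord) :=
      Cardinal.isSuccLimit_ord (hmu.trans (Order.le_succ μ))
    have hγ1 : Order.succ γ < (Order.succ μ).ord := hslim.succ_lt hγ
    obtain ⟨b₁, hb₁⟩ := Ordinal.typein_surj ((· < ·) : N → N → Prop)
      (by rw [Ordinal.type_toType]; exact hγ1)
    -- the family to avoid
    set H := {w : (M × ↥S) → Θ | Ordinal.typein ((· < ·) : N → N → Prop) (e w) ≤ γ} with hHdef
    have hHiff : ∀ w, w ∈ H ↔ e w < b₁ := by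
      intro w
      rw [hHdef, mem_setOf_eq, ← Order.lt_succ_iff, ← hb₁, Ordinal.typein_lt_typein]
    have hHcard : #(↥H) ≤ μ := by
      have hemb : Function.Injective (fun w : ↥H => (⟨e w.1, (hHiff w.1).1 w.2⟩ :
          {y : N // y < b₁})) := by
        intro w w' hww
        exact Subtype.ext (e.injective (congrArg Subtype.val hww))
      have h1 : #(↥H) ≤ #{y : N // y < b₁} := Cardinal.mk_le_of_injective hemb
      have h2 : #{y : N // y < b₁} = (Ordinal.typein ((· < ·) : N → N → Prop) b₁).card :=
        (Ordinal.card_typein b₁).symm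
      rw [h2, hb₁] at h1
      have h3 : (Order.succ γ).card < Order.succ μ := Cardinal.lt_ord.1 hγ1
      exact h1.trans (Order.lt_succ_iff.1 h3)
    -- embed H into M
    have hHM : #(↥H) ≤ #M := by rw [hMcard]; exact hHcard
    obtain ⟨ι⟩ := (Cardinal.le_def _ _).mp hHM
    -- stage pairs
    have key : ∀ j : ↥S, ∃ x y : M, x ≠ y ∧
        ∀ h : ↥H, ¬ ((j : M) < ι h) →
          ((h : (M × ↥S) → Θ) (x, j) = v₁ ↔ (h : (M × ↥S) → Θ) (y, j) = v₁) := by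
      intro j
      set T := {h : ↥H // ¬ ((j : M) < ι h)} with hTdef
      have hTcard : #T < μ := by
        have hembT : Function.Injective (fun h : T =>
            if hlt : (ι h.1 : M) < (j : M) then (some ⟨ι h.1, hlt⟩ : Option {m : M // m < (j : M)})
            else none) := by
          intro h h' hhh
          dsimp only at hhh
          apply Subtype.ext
          by_cases h1 : (ι h.1 : M) < (j : M) <;> by_cases h2 : (ι h'.1 : M) < (j : M)
          · rw [dif_pos h1, dif_pos h2] at hhh
            have := Option.some.inj hhh
            exact ι.injective (congrArg Subtype.val this)
          · rw [dif_pos h1, dif_neg h2] at hhh; exact absurd hhh (by simp)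
          · rw [dif_neg h1, dif_pos h2] at hhh; exact absurd hhh (by simp)
          · -- both equal j
            have e1 : ι h.1 = (j : M) := le_antisymm (not_lt.1 h.2) (not_lt.1 h1)
            have e2 : ι h'.1 = (j : M) := le_antisymm (not_lt.1 h'.2) (not_lt.1 h2)
            exact ι.injective (e1.trans e2.symm)
        have h1 : #T ≤ #(Option {m : M // m < (j : M)}) := Cardinal.mk_le_of_injective hembT
        have h2 : #{m : M // m < (j : M)} < μ := by
          have := Cardinal.card_typein_toType_lt μ (j : M)
          rwa [Ordinal.card_typein (j : M)] at this
        rw [Cardinal.mk_option] at h1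
        exact h1.trans_lt (Cardinal.add_lt_of_lt hmu h2 (Cardinal.one_lt_aleph0.trans_le hmu))
      have htr : #(T → Prop) < #M := by
        rw [Cardinal.mk_arrow, Cardinal.lift_id, Cardinal.lift_id, Cardinal.mk_Prop, hMcard]
        exact hsl _ hTcard
      obtain ⟨x, y, hxy, hfxy⟩ := my_exists_ne_of_mk_lt
        (fun m : M => (fun h : T => ((h.1 : (M × ↥S) → Θ) (m, j) = v₁ : Prop))) htr
      refine ⟨x, y, hxy, ?_⟩
      intro h hh
      have := congrFun hfxy (⟨h, hh⟩ : T)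
      exact iff_of_eq this
    choose xs ys hxy hstage using key
    -- the avoiding pattern
    refine ⟨{d : M × ↥S | d.1 = xs d.2 ∨ d.1 = ys d.2},
      fun d => if d.1 = xs d.2 then v₁ else v₀, ?_, ?_⟩
    · -- cardinality of the pattern
      have hembA : Function.Injective (fun d : ↥{d : M × ↥S | d.1 = xs d.2 ∨ d.1 = ys d.2} =>
          ((d.1.2, (d.1.1 = xs d.1.2 : Bool)) : ↥S × Bool)) := by
        intro a b hab
        dsimp only at hab
        have hj : a.1.2 = b.1.2 := congrArg Prod.fst hab
        have hbool := congrArg Prod.snd hab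
        dsimp only at hbool
        apply Subtype.ext
        have ha := a.2
        have hb := b.2
        simp only [mem_setOf_eq] at ha hb
        by_cases h1 : a.1.1 = xs a.1.2
        · have h2 : (b.1.1 = xs b.1.2 : Bool) = true := by
            rw [← hbool]; simp [h1]
          simp only [decide_eq_true_eq] at h2
          have : a.1.1 = b.1.1 := by rw [h1, h2, hj]
          exact Prod.ext this hj
        · have h2 : ¬ (b.1.1 = xs b.1.2) := by
            intro hcon
            have : (a.1.1 = xs a.1.2 : Bool) = true := by rw [hbool]; simp [hcon, hj]
            simp only [decide_eq_true_eq] at this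
            exact h1 this
          have ha' : a.1.1 = ys a.1.2 := ha.resolve_left h1
          have hb' : b.1.1 = ys b.1.2 := hb.resolve_left h2
          have : a.1.1 = b.1.1 := by rw [ha', hb', hj]
          exact Prod.ext this hj
      have h1 : #(↥{d : M × ↥S | d.1 = xs d.2 ∨ d.1 = ys d.2}) ≤ #(↥S × Bool) :=
        Cardinal.mk_le_of_injective hembA
      rw [Cardinal.mk_prod, Cardinal.lift_id, Cardinal.lift_id, Cardinal.mk_bool, hSc] at h1
      exact h1
    · -- the forcing property
      intro w hw
      by_contra hle
      push_neg at hle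
      have hwH : w ∈ H := hle
      obtain ⟨j, hjS, hj⟩ := hSu (ι ⟨w, hwH⟩)
      have h1 : w (xs ⟨j, hjS⟩, ⟨j, hjS⟩) = v₁ := by
        have h0 := hw (xs ⟨j, hjS⟩, ⟨j, hjS⟩) (Or.inl rfl)
        dsimp only at h0
        rwa [if_pos rfl] at h0
      have h2 : w (ys ⟨j, hjS⟩, ⟨j, hjS⟩) = v₀ := by
        have h0 := hw (ys ⟨j, hjS⟩, ⟨j, hjS⟩) (Or.inr rfl)
        dsimp only at h0
        rwa [if_neg (fun hcon => hxy ⟨j, hjS⟩ hcon.symm)] at h0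
      have h3 := hstage ⟨j, hjS⟩ ⟨w, hwH⟩ hj
      rw [show ((⟨w, hwH⟩ : ↥H) : (M × ↥S) → Θ) = w from rfl] at h3
      rw [h1, h2] at h3
      rw [eq_self_iff_true] at h3
      exact hv (h3.mp trivial)


/-- Shelah 5.4(a): for `λ` singular strong limit and `⟨μ_α : α < δ*⟩` strong limits with
`2^{μ_α} = μ_α⁺`, if `∏ μ_α⁺ / J` is `χ⁺`-directed for some ideal `J` on `δ*` containing the
bounded sets, then `d_{<κ}(λ, θ) > χ`. -/
theorem stmt10 (lam theta kap : Cardinal) (δs : Ordinal)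
    (hstrong : ∀ σ : Cardinal, σ < lam → (2 : Cardinal) ^ σ < lam)
    (hsing : lam.ord.cof < lam)
    (hth1 : 2 ≤ theta) (hth2 : theta < lam)
    (hlim : Order.IsSuccLimit δs)
    (hcf1 : lam.ord.cof = δs.cof) (hcf2 : δs.cof.ord ≤ δs)
    (hcf3 : δs < kap.ord.cof.ord) (hkap : kap < lam)
    (mu : δs.ToType → Cardinal)
    (hmono : ∀ i j : δs.ToType, i < j → mu i < mu j)
    (hmusl : ∀ i, ∀ σ : Cardinal, σ < mu i → (2 : Cardinal) ^ σ < mu i)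
    (hsup : (⨆ i, mu i) = lam)
    (hth0 : ∀ i, theta < mu i)
    (hcfmu : ∀ i, (mu i).ord.cof < kap)
    (h2mu : ∀ i, (2 : Cardinal) ^ mu i = Order.succ (mu i))
    (chi : Cardinal) (hchi1 : lam < chi) (hchi2 : chi < 2 ^ lam)
    (J : SIdeal δs.ToType)
    (hJbd : ∀ B : Set δs.ToType, BddAbove B → B ∈ J.sets)
    (hdir : ∀ F : Set (δs.ToType → Ordinal),
      #F ≤ Cardinal.lift.{1} chi →
      (∀ f ∈ F, ∀ i, f i < (Order.succ (mu i)).ord) →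
      ∃ g : δs.ToType → Ordinal, (∀ i, g i < (Order.succ (mu i)).ord) ∧
        ∀ f ∈ F, { i | g i < f i } ∈ J.sets) :
    chi < dens kap lam theta := by
  classical
  have hκcof : δs.card < kap.ord.cof := Cardinal.lt_ord.1 hcf3
  have hδinf : ℵ₀ ≤ δs.card := by
    have h1 : (Ordinal.omega0 : Ordinal) ≤ δs := Ordinal.omega0_le_of_isSuccLimit hlim
    have h2 := Ordinal.card_le_card h1
    rwa [Ordinal.card_omega0] at h2
  have hκinf : ℵ₀ ≤ kap :=
    le_of_lt (lt_of_le_of_lt hδinf (hκcof.trans_le (Ordinal.cof_ord_le kap)))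
  have hnat : ∀ i, ∀ n : ℕ, (n : Cardinal) < mu i := by
    intro i n
    induction n with
    | zero =>
      have h2 : (2 : Cardinal) ≤ mu i := hth1.trans (hth0 i).le
      simpa using lt_of_lt_of_le (by norm_num : (0 : Cardinal) < 2) h2
    | succ n ih =>
      have hp : (2 : Cardinal) ^ (n : Cardinal) < mu i := hmusl i _ ih
      have hc : ((n + 1 : ℕ) : Cardinal.{0}) ≤ (2 : Cardinal.{0}) ^ (n : Cardinal.{0}) := by
        rw [Cardinal.power_natCast]
        exact_mod_cast Nat.succ_le_of_lt (Nat.lt_two_pow_self)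
      exact lt_of_le_of_lt (by exact_mod_cast hc) hp
  have hmuinf : ∀ i, ℵ₀ ≤ mu i := fun i => Cardinal.aleph0_le.2 fun n => (hnat i n).le
  have hΘ2 : (2 : Cardinal) ≤ #theta.out := by rw [Cardinal.mk_out]; exact hth1
  obtain ⟨v₁, v₀, hv⟩ := Cardinal.two_le_iff.1 hΘ2
  -- choose a coder for each index
  have hcoder : ∀ i : δs.ToType, ∃ (D : Type) (cd : (D → theta.out) → Ordinal),
      #D = mu i ∧ (∀ w, cd w < (Order.succ (mu i)).ord) ∧
      ∀ γ : Ordinal, γ < (Order.succ (mu i)).ord →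
        ∃ (A : Set D) (ψ : D → theta.out), #(↥A) ≤ (mu i).ord.cof * 2 ∧
          ∀ w : D → theta.out, (∀ d ∈ A, w d = ψ d) → γ < cd w := fun i =>
    my_exists_coder theta.out v₀ v₁ hv.symm (mu i) (hmuinf i) (hmusl i)
      (by rw [Cardinal.mk_out]; exact (hth0 i).le) hΘ2 (h2mu i)
  choose D cd hD hcd1 hcd2 using hcoder
  -- a global partition of `lam.out`
  haveI : Nonempty δs.ToType := Ordinal.nonempty_toType_iff.2 hlim.ne_bot
  have hsum : Cardinal.sum (fun i => #(D i)) = lam := by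
    simp only [hD]
    apply le_antisymm
    · have h1 := Cardinal.sum_le_mk_mul_iSup mu
      rw [hsup, Cardinal.mk_toType] at h1
      have h2 : δs.card * lam = lam := by
        rw [Cardinal.mul_eq_max hδinf ((hmuinf _).trans (hsup ▸
          le_ciSup (Cardinal.bddAbove_range _) (Classical.arbitrary _)))]
        exact max_eq_right (le_of_lt (lt_of_le_of_lt
          (hκcof.le.trans (Ordinal.cof_ord_le kap)) hkap))
      exact h1.trans h2.le
    · rw [← hsup]
      exact ciSup_le' fun i => Cardinal.le_sum _ i
  have hmkL : #(lam.out) = #(Σ i, D i) := by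
    rw [Cardinal.mk_out, Cardinal.mk_sigma, hsum]
  obtain ⟨E⟩ : Nonempty (lam.out ≃ Σ i, D i) := Cardinal.eq.mp hmkL
  -- the density witness set is nonempty
  have hdense_univ : ∀ (A : Set lam.out) (g0 : ↥A → theta.out), #(↥A) < kap →
      ∃ f ∈ (Set.univ : Set (lam.out → theta.out)), ∀ x : A, f x.1 = g0 x := by
    intro A g0 _
    refine ⟨fun x => if h : x ∈ A then g0 ⟨x, h⟩ else v₀, Set.mem_univ _, ?_⟩
    intro x
    simp [x.2]
  have hne : {c : Cardinal | ∃ F : Set (lam.out → theta.out), #F = c ∧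
      ∀ (A : Set lam.out) (g0 : ↥A → theta.out), #(↥A) < kap →
        ∃ f ∈ F, ∀ x : A, f x.1 = g0 x}.Nonempty :=
    ⟨_, Set.univ, rfl, hdense_univ⟩
  unfold dens
  refine lt_of_lt_of_le (Order.lt_succ chi) (le_csInf hne ?_)
  rintro c ⟨F, rfl, hFd⟩
  rw [Order.succ_le_iff]
  by_contra hchiF
  push_neg at hchiF
  -- the coding map into the product
  set cod : (lam.out → theta.out) → (δs.ToType → Ordinal) :=
    fun f i => cd i (fun d => f (E.symm ⟨i, d⟩)) with hcod
  have hF' : #(cod '' F) ≤ Cardinal.lift.{1} chi := by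
    have h1 := Cardinal.mk_image_le_lift (f := cod) (s := F)
    simp only [Cardinal.lift_id'] at h1
    exact h1.trans (Cardinal.lift_le.2 hchiF)
  obtain ⟨g, hg1, hg2⟩ := hdir (cod '' F) hF' (by rintro f' ⟨f, -, rfl⟩ i; exact hcd1 i _)
  -- per-index avoiding patterns above `g`
  have hpat : ∀ i, ∃ (A : Set (D i)) (ψ : D i → theta.out),
      #(↥A) ≤ (mu i).ord.cof * 2 ∧ ∀ w, (∀ d ∈ A, w d = ψ d) → g i < cd i w :=
    fun i => hcd2 i (g i) (hg1 i)
  choose As ψs hAs hforce using hpat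
  -- the global pattern
  set A : Set lam.out := {x | (E x).2 ∈ As (E x).1} with hA
  have hAcard : #(↥A) < kap := by
    have hcomp : Function.Injective ((fun p : Σ i, ↥(As i) => (⟨p.1, p.2.1⟩ : Σ i, D i)) ∘
        (fun x : ↥A => (⟨(E x.1).1, ⟨(E x.1).2, x.2⟩⟩ : Σ i, ↥(As i)))) := by
      intro x y h
      simp only [Function.comp] at h
      apply Subtype.ext
      apply E.injective
      simpa using h
    have hemb := hcomp.of_comp
    have h1 : #(↥A) ≤ #(Σ i, ↥(As i)) := Cardinal.mk_le_of_injective hemb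
    have h2 : #(Σ i, ↥(As i)) = Cardinal.sum (fun i => #(↥(As i))) := Cardinal.mk_sigma _
    have h3 : Cardinal.sum (fun i => #(↥(As i))) ≤
        Cardinal.sum (fun i => (mu i).ord.cof * 2) := Cardinal.sum_le_sum _ _ hAs
    have hci : ∀ i, (mu i).ord.cof * 2 < kap := fun i =>
      Cardinal.mul_lt_of_lt hκinf (hcfmu i)
        (lt_of_lt_of_le (by exact_mod_cast Cardinal.nat_lt_aleph0 2) hκinf)
    have hsupb : (⨆ i, ((mu i).ord.cof * 2)) < kap := by
      have hsup0 : (⨆ i, ((mu i).ord.cof * 2).ord) < kap.ord :=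
        Ordinal.iSup_lt_ord (by rw [Cardinal.mk_toType]; exact hκcof)
          (fun i => Cardinal.ord_lt_ord.2 (hci i))
      have hb : BddAbove (Set.range (fun i => ((mu i).ord.cof * 2).ord)) :=
        Ordinal.bddAbove_range _
      have hle : (⨆ i, ((mu i).ord.cof * 2)) ≤ (⨆ i, ((mu i).ord.cof * 2).ord).card := by
        apply ciSup_le'
        intro i
        rw [← Cardinal.card_ord ((mu i).ord.cof * 2)]
        exact Ordinal.card_le_card (le_ciSup hb i)
      exact lt_of_le_of_lt hle (Cardinal.lt_ord.1 hsup0)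
    have hsumb : Cardinal.sum (fun i => (mu i).ord.cof * 2) < kap := by
      have h4 := Cardinal.sum_le_mk_mul_iSup (fun i => (mu i).ord.cof * 2)
      have h5 : #δs.ToType * (⨆ i, ((mu i).ord.cof * 2)) < kap := by
        refine Cardinal.mul_lt_of_lt hκinf ?_ hsupb
        rw [Cardinal.mk_toType]
        exact lt_of_lt_of_le hκcof (Ordinal.cof_ord_le kap)
      exact lt_of_le_of_lt h4 h5
    exact lt_of_le_of_lt (h1.trans (h2.le.trans h3)) hsumb
  -- the pattern values
  obtain ⟨f, hfF, hfpat⟩ := hFd A (fun x => ψs (E x.1).1 (E x.1).2) hAcard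
  have hall : ∀ i, g i < cod f i := by
    intro i
    have h7 := hforce i (fun d => f (E.symm ⟨i, d⟩)) ?_
    · exact h7
    · intro d hd
      have hmem : E.symm ⟨i, d⟩ ∈ A := by
        show (E (E.symm ⟨i, d⟩)).2 ∈ As (E (E.symm ⟨i, d⟩)).1
        rw [Equiv.apply_symm_apply]
        exact hd
      have h6 := hfpat ⟨E.symm ⟨i, d⟩, hmem⟩
      have h8 : E (E.symm ⟨i, d⟩) = ⟨i, d⟩ := Equiv.apply_symm_apply E ⟨i, d⟩
      rw [h8] at h6
      exact h6
  have huniv : {i | g i < cod f i} = Set.univ :=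
    Set.eq_univ_of_forall hall
  have hmemJ : Set.univ ∈ J.sets := huniv ▸ hg2 (cod f) ⟨f, hfF, rfl⟩
  exact J.univ_not_mem hmemJ


end
end

section
/- Let δ be an infinite ordinal, J an ideal on δ, and for each α < δ let P_α be a nonempty partial order of cardinality at most χ_α which is λ_α-directed (every subset of P_α of cardinality less than λ_α has an upper bound in P_α), where λ_α is a regular cardinal with |δ|⁺ < λ_α ≤ χ_α. For A ⊆ δ let J+A denote the ideal of all B ⊆ δ with B ∖ A ∈ J, and for f, g ∈ ∏_{α<δ} P_α write f ≤_{J+A} g iff {α < δ : f(α) ≤_{P_α} g(α) fails} ∈ J+A. Suppose θ* is the least cardinal θ for which there exist A ⊆ δ with δ ∖ A ∉ J and a ≤_{J+A}-increasing sequence ⟨f_i : i < θ⟩ in ∏_{α<δ} P_α such that no g ∈ ∏_{α<δ} P_α satisfies: for every i < θ, {α < δ : f_i(α) ≤_{P_α} g(α)} ∉ J+A. Then every subset of ∏_{α<δ} P_α of cardinality less than θ* has a ≤_J-upper bound, where ≤_J means ≤_{J+∅}. -/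
open Cardinal Set

noncomputable section

instance isWellOrder_toType_lt' (o : Ordinal.{u}) :
    IsWellOrder o.ToType ((· < ·) : o.ToType → o.ToType → Prop) := isWellOrder_lt

/-- Shelah 5.4A: if `θ*` is the least length of a `≤_{J+A}`-increasing sequence in
`∏ P_α` with no pseudo-upper-bound, then `∏ P_α / J` is `θ*`-directed. -/
theorem stmt11 (δ : Ordinal) (hδ : ℵ₀ ≤ δ.card)
    (J : SIdeal δ.ToType)
    (P : δ.ToType → Type) [inst : ∀ x, PartialOrder (P x)]
    (lamf chif : δ.ToType → Cardinal)
    (hne : ∀ x, Nonempty (P x))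
    (hcard : ∀ x, #(P x) ≤ chif x)
    (hreg : ∀ x, (lamf x).IsRegular)
    (hlow : ∀ x, Order.succ δ.card < lamf x)
    (hup : ∀ x, lamf x ≤ chif x)
    (hdir : ∀ x, ∀ s : Set (P x), #(↥s) < lamf x → ∃ b : P x, ∀ y ∈ s, y ≤ b)
    (θstar : Cardinal)
    (hθ : IsLeast { θ : Cardinal | ∃ A : Set δ.ToType, (Set.univ \ A) ∉ J.sets ∧
        ∃ f : θ.ord.ToType → (∀ x, P x),
          (∀ i j : θ.ord.ToType, i ≤ j →
            ({ x | ¬ f i x ≤ f j x } \ A) ∈ J.sets) ∧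
          ¬ ∃ g : ∀ x, P x, ∀ i, ({ x | f i x ≤ g x } \ A) ∉ J.sets } θstar) :
    ∀ F : Set (∀ x, P x), #(↥F) < θstar →
      ∃ g : ∀ x, P x, ∀ f ∈ F, { x | ¬ f x ≤ g x } ∈ J.sets := by
  classical
  have hκinf : ℵ₀ ≤ Order.succ δ.card := hδ.trans (Order.le_succ _)
  -- pointwise upper bounds for families of size ≤ |δ|⁺
  have ptub : ∀ S : Set (∀ x, P x), #(↥S) ≤ Order.succ δ.card →
      ∃ b : ∀ x, P x, ∀ f ∈ S, ∀ x, f x ≤ b x := by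
    intro S hS
    have h1 : ∀ x, ∃ b : P x, ∀ y ∈ (fun f : ∀ x, P x => f x) '' S, y ≤ b := by
      intro x
      exact hdir x _ (lt_of_le_of_lt (Cardinal.mk_image_le.trans hS) (hlow x))
    choose b hb using h1
    exact ⟨b, fun f hf x => hb x (f x) ⟨f, hf, rfl⟩⟩
  have Jsub : ∀ {A B : Set δ.ToType}, A ∈ J.sets → B ⊆ A → B ∈ J.sets :=
    fun hA hBA => J.mem_of_subset hA hBA
  have Jrefl : ∀ u : ∀ x, P x, {x | ¬ u x ≤ u x} ∈ J.sets := by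
    intro u
    have : {x | ¬ u x ≤ u x} = ∅ := by
      ext x; simp
    rw [this]; exact J.empty_mem
  have Jtrans : ∀ {u v w : ∀ x, P x}, {x | ¬ u x ≤ v x} ∈ J.sets →
      {x | ¬ v x ≤ w x} ∈ J.sets → {x | ¬ u x ≤ w x} ∈ J.sets := by
    intro u v w h1 h2
    refine Jsub (J.union_mem h1 h2) ?_
    intro x hx
    by_contra hc
    simp only [Set.mem_union, Set.mem_setOf_eq, not_or, not_not] at hc
    exact hx (hc.1.trans hc.2)
  suffices H : ∀ c : Cardinal, c < θstar → ∀ F : Set (∀ x, P x), #(↥F) ≤ c →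
      ∃ g : ∀ x, P x, ∀ f ∈ F, { x | ¬ f x ≤ g x } ∈ J.sets by
    exact fun F hF => H _ hF F le_rfl
  intro c
  induction c using Cardinal.lt_wf.induction with
  | _ c IH =>
  intro hc F hF
  rcases le_or_gt (#↥F) (Order.succ δ.card) with hsmall | hbig
  · obtain ⟨b, hb⟩ := ptub F hsmall
    refine ⟨b, fun f hf => ?_⟩
    have : {x | ¬ f x ≤ b x} = ∅ :=
      Set.eq_empty_of_forall_notMem fun x hx => hx (hb f hf x)
    rw [this]; exact J.empty_mem
  rcases lt_or_eq_of_le hF with hlt | hEq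
  · exact IH _ hlt (hlt.trans hc) F le_rfl
  subst hEq
  -- now κ < #F = c < θstar
  have hcinf : ℵ₀ ≤ #↥F := hκinf.trans hbig.le
  have IH' : ∀ G : Set (∀ x, P x), #(↥G) < #(↥F) →
      ∃ b : ∀ x, P x, ∀ v ∈ G, {x | ¬ v x ≤ b x} ∈ J.sets :=
    fun G hG => IH _ hG (hG.trans hc) G le_rfl
  obtain ⟨e⟩ : Nonempty ((#↥F).ord.ToType ≃ ↥F) :=
    Cardinal.eq.mp (Cardinal.mk_ord_toType (#↥F))
  set cT := (#↥F).ord.ToType with hcT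
  set f' : cT → ∀ x, P x := (fun i => ((e i : ↥F) : ∀ x, P x)) with hf'
  -- build an increasing sequence g by recursion
  have gex : ∀ (i : cT) (prev : ∀ j : cT, j < i → ∀ x, P x),
      ∃ b : ∀ x, P x, ∀ v ∈ insert (f' i) (Set.range fun j : Set.Iio i => prev j.1 j.2),
        {x | ¬ v x ≤ b x} ∈ J.sets := by
    intro i prev
    apply IH'
    refine lt_of_le_of_lt (Cardinal.mk_insert_le.trans
      (add_le_add Cardinal.mk_range_le le_rfl)) ?_
    exact Cardinal.add_lt_of_lt hcinf (Cardinal.mk_Iio_ord_toType i)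
      (lt_of_lt_of_le Cardinal.one_lt_aleph0 hcinf)
  have wfc : WellFounded ((· < ·) : cT → cT → Prop) := wellFounded_lt
  set g : cT → ∀ x, P x :=
    WellFounded.fix wfc (fun i prev => Classical.choose (gex i prev)) with hgdef
  have gfix : ∀ i : cT, g i = Classical.choose (gex i (fun j _ => g j)) := by
    intro i
    rw [hgdef]
    exact WellFounded.fix_eq _ _ _
  have gspec : ∀ i : cT, ∀ v ∈ insert (f' i) (Set.range fun j : Set.Iio i => g j.1),
      {x | ¬ v x ≤ g i x} ∈ J.sets := by
    intro i
    rw [gfix i]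
    exact Classical.choose_spec (gex i (fun j _ => g j))
  have gmono : ∀ {j i : cT}, j ≤ i → {x | ¬ g j x ≤ g i x} ∈ J.sets := by
    intro j i hji
    rcases eq_or_lt_of_le hji with rfl | h
    · exact Jrefl _
    · exact gspec i (g j) (Set.mem_insert_iff.mpr (Or.inr ⟨⟨j, h⟩, rfl⟩))
  have gf : ∀ i : cT, {x | ¬ f' i x ≤ g i x} ∈ J.sets :=
    fun i => gspec i _ (Set.mem_insert _ _)
  -- reduce to bounding the increasing sequence g
  suffices hgb : ∃ b : ∀ x, P x, ∀ i : cT, {x | ¬ g i x ≤ b x} ∈ J.sets by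
    obtain ⟨b, hbb⟩ := hgb
    refine ⟨b, fun f hf => ?_⟩
    have hfe : f = f' (e.symm ⟨f, hf⟩) := by
      rw [hf']
      simp only [Equiv.apply_symm_apply]
    rw [hfe]
    exact Jtrans (gf _) (hbb _)
  rcases lt_or_ge ((#↥F).ord.cof) (#↥F) with hcof | hcof
  · -- small cofinality: bound a cofinal subfamily using IH
    obtain ⟨S, hSunb, hScard⟩ := Order.exists_cof_eq cT
    have hS2 : #↥S < #↥F := by
      rw [hScard, Ordinal.cof_toType]; exact hcof
    obtain ⟨b, hbb⟩ := IH' (g '' S) (lt_of_le_of_lt Cardinal.mk_image_le hS2)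
    refine ⟨b, fun i => ?_⟩
    obtain ⟨j, hjS, hji⟩ := hSunb i
    exact Jtrans (gmono hji) (hbb _ ⟨j, hjS, rfl⟩)
  · -- regular case: main argument
    by_contra hnb
    push_neg at hnb
    -- hnb : ∀ b, ∃ i, {x | ¬ g i x ≤ b x} ∉ J.sets
    have hcnot : #↥F ∉ { θ : Cardinal | ∃ A : Set δ.ToType, (Set.univ \ A) ∉ J.sets ∧
        ∃ f : θ.ord.ToType → (∀ x, P x),
          (∀ i j : θ.ord.ToType, i ≤ j →
            ({ x | ¬ f i x ≤ f j x } \ A) ∈ J.sets) ∧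
          ¬ ∃ g : ∀ x, P x, ∀ i, ({ x | f i x ≤ g x } \ A) ∉ J.sets } :=
      fun hmem => absurd (hθ.2 hmem) (not_le.mpr hc)
    have star : ∀ A : Set δ.ToType, (Set.univ \ A) ∉ J.sets →
        ∃ q : ∀ x, P x, ∀ i : cT, ({x | g i x ≤ q x} \ A) ∉ J.sets := by
      intro A hA
      by_contra hq
      push_neg at hq
      apply hcnot
      refine ⟨A, hA, g, fun i j hij => Jsub (gmono hij) Set.diff_subset, ?_⟩
      rintro ⟨q, hq'⟩
      obtain ⟨i, hi⟩ := hq q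
      exact hq' i hi
    -- the |δ|⁺-indexed recursion
    set Z := (Order.succ δ.card).ord.ToType with hZ
    have hZne : Nonempty Z := by
      rw [hZ]
      rw [Ordinal.toType_nonempty_iff_ne_zero]
      intro h0
      have := congrArg Ordinal.card h0
      rw [Cardinal.card_ord, Ordinal.card_zero] at this
      rw [this] at hκinf
      exact (Cardinal.aleph0_pos.not_ge hκinf)
    have hκord : (Order.succ δ.card).ord.cof = Order.succ δ.card :=
      le_antisymm (Ordinal.cof_ord_le _) (Cardinal.isRegular_succ hδ).2
    have stepex : ∀ (ζ : Z) (prev : ∀ ξ : Z, ξ < ζ → ((∀ x, P x) × (∀ x, P x) × (∀ x, P x) × cT)),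
        ∃ s : ((∀ x, P x) × (∀ x, P x) × (∀ x, P x) × cT),
        (∀ (ξ : Z) (hξ : ξ < ζ) (x : δ.ToType), (prev ξ hξ).1 x ≤ s.2.1 x) ∧
        ({x | ¬ g s.2.2.2 x ≤ s.2.1 x} ∉ J.sets) ∧
        (∀ i : cT, ({x | g i x ≤ s.2.2.1 x} \ {x | g s.2.2.2 x ≤ s.2.1 x}) ∉ J.sets) ∧
        (∀ x, s.2.1 x ≤ s.1 x) ∧ (∀ x, s.2.2.1 x ≤ s.1 x) := by
      intro ζ prev
      obtain ⟨p, hp⟩ := ptub (Set.range fun ξ : Set.Iio ζ => (prev ξ.1 ξ.2).1)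
        (le_of_lt (lt_of_le_of_lt Cardinal.mk_range_le (Cardinal.mk_Iio_ord_toType ζ)))
      obtain ⟨i0, hi0⟩ := hnb p
      have hA : (Set.univ \ {x | g i0 x ≤ p x}) ∉ J.sets := by
        have heq : Set.univ \ {x | g i0 x ≤ p x} = {x | ¬ g i0 x ≤ p x} := by
          ext x; simp
        rw [heq]; exact hi0
      obtain ⟨q, hqps⟩ := star _ hA
      have h2 : #↥({p, q} : Set (∀ x, P x)) ≤ Order.succ δ.card := by
        have h3 := Cardinal.mk_insert_le (α := ∀ x, P x) (a := p) (s := {q})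
        rw [Cardinal.mk_singleton] at h3
        refine h3.trans (le_trans ?_ hκinf)
        have : (1 : Cardinal) + 1 = (2 : ℕ) := by norm_num
        rw [this]
        exact (Cardinal.nat_lt_aleph0 2).le
      obtain ⟨b, hbp⟩ := ptub {p, q} h2
      exact ⟨(b, p, q, i0), fun ξ hξ x => hp _ ⟨⟨ξ, hξ⟩, rfl⟩ x, hi0, hqps,
        fun x => hbp p (by simp) x, fun x => hbp q (by simp) x⟩
    have wfZ : WellFounded ((· < ·) : Z → Z → Prop) := wellFounded_lt
    set HH : Z → ((∀ x, P x) × (∀ x, P x) × (∀ x, P x) × cT) :=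
      WellFounded.fix wfZ (fun ζ prev => Classical.choose (stepex ζ prev)) with hHH
    have Hfix : ∀ ζ : Z, HH ζ = Classical.choose (stepex ζ (fun ξ _ => HH ξ)) := by
      intro ζ
      rw [hHH]
      exact WellFounded.fix_eq _ _ _
    have Hspec : ∀ ζ : Z,
        (∀ (ξ : Z), ξ < ζ → ∀ (x : δ.ToType), (HH ξ).1 x ≤ (HH ζ).2.1 x) ∧
        ({x | ¬ g (HH ζ).2.2.2 x ≤ (HH ζ).2.1 x} ∉ J.sets) ∧
        (∀ i : cT, ({x | g i x ≤ (HH ζ).2.2.1 x} \ {x | g (HH ζ).2.2.2 x ≤ (HH ζ).2.1 x}) ∉ J.sets) ∧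
        (∀ x, (HH ζ).2.1 x ≤ (HH ζ).1 x) ∧ (∀ x, (HH ζ).2.2.1 x ≤ (HH ζ).1 x) := by
      intro ζ
      rw [Hfix ζ]
      exact Classical.choose_spec (stepex ζ (fun ξ _ => HH ξ))
    have hmono : ∀ {ξ ζ : Z}, ξ ≤ ζ → ∀ x, (HH ξ).1 x ≤ (HH ζ).1 x := by
      intro ξ ζ hξζ x
      rcases eq_or_lt_of_le hξζ with rfl | h
      · exact le_rfl
      · exact le_trans ((Hspec ζ).1 ξ h x) ((Hspec ζ).2.2.2.1 x)
    have hcofZ : Ordinal.cof (Ordinal.type ((· < ·) : Z → Z → Prop)) = Order.succ δ.card := by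
      rw [Ordinal.type_toType]; exact hκord
    -- stabilization bound for each i
    have zbnd : ∀ i : cT, ∃ ζi : Z, ∀ (ζ : Z) (x : δ.ToType),
        g i x ≤ (HH ζ).1 x → g i x ≤ (HH ζi).1 x := by
      intro i
      have hw : ∀ x : δ.ToType, ∃ ζ : Z, (∃ ζ', g i x ≤ (HH ζ').1 x) → g i x ≤ (HH ζ).1 x := by
        intro x
        by_cases hx : ∃ ζ', g i x ≤ (HH ζ').1 x
        · obtain ⟨ζ', hζ'⟩ := hx; exact ⟨ζ', fun _ => hζ'⟩
        · exact ⟨Classical.arbitrary Z, fun h' => absurd h' hx⟩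
      choose w hw using hw
      have hbd : Set.Bounded (· < ·) (Set.range w) := by
        apply not_isCofinal_iff.mp
        refine fun hcf => (Order.cof_le hcf).not_gt ?_
        rw [Ordinal.cof_toType, hκord]
        refine lt_of_le_of_lt Cardinal.mk_range_le ?_
        rw [Cardinal.mk_toType]
        exact Order.lt_succ _
      obtain ⟨ζi, hζi⟩ := hbd
      refine ⟨ζi, fun ζ x hx => ?_⟩
      exact le_trans (hw x ⟨ζ, hx⟩) (hmono (le_of_lt (hζi _ ⟨x, rfl⟩)) x)
    -- bound on the indices i0 chosen along the way
    have hIbd : Set.Bounded (· < ·) (Set.range fun ζ : Z => (HH ζ).2.2.2) := by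
      apply not_isCofinal_iff.mp
      refine fun hcf => (Order.cof_le hcf).not_gt ?_
      rw [Ordinal.cof_toType]
      refine lt_of_le_of_lt (Cardinal.mk_range_le.trans (le_of_eq (Cardinal.mk_ord_toType _))) ?_
      exact lt_of_lt_of_le hbig hcof
    obtain ⟨istar, histar⟩ := hIbd
    obtain ⟨ζi, hζistab⟩ := zbnd istar
    have hζbig : ∃ ζ : Z, ζi < ζ := by
      have hbd : Set.Bounded (· < ·) ({ζi} : Set Z) := by
        apply not_isCofinal_iff.mp
        refine fun hcf => (Order.cof_le hcf).not_gt ?_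
        rw [Ordinal.cof_toType, hκord, Cardinal.mk_singleton]
        exact lt_of_lt_of_le Cardinal.one_lt_aleph0 hκinf
      obtain ⟨ζ, hζ⟩ := hbd
      exact ⟨ζ, hζ ζi rfl⟩
    obtain ⟨ζ, hζgt⟩ := hζbig
    have hi0lt : (HH ζ).2.2.2 < istar := histar _ ⟨ζ, rfl⟩
    -- the big set is not in J
    have big : ({x | g istar x ≤ (HH ζ).1 x} \ {x | g (HH ζ).2.2.2 x ≤ (HH ζ).2.1 x}) ∉ J.sets := by
      intro hmem
      apply (Hspec ζ).2.2.1 istar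
      refine Jsub hmem ?_
      rintro x ⟨hx1, hx2⟩
      exact ⟨le_trans hx1 ((Hspec ζ).2.2.2.2 x), hx2⟩
    -- but it is in J: contradiction
    apply big
    refine Jsub (gmono (le_of_lt hi0lt)) ?_
    rintro x ⟨hx1, hx2⟩
    intro hcon
    apply hx2
    have hx3 : g istar x ≤ (HH ζi).1 x := hζistab ζ x hx1
    exact le_trans hcon (le_trans hx3 ((Hspec ζ).1 ζi hζgt x))


end
end
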